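/- Let a < b be real numbers, 1 < α < 2, and let y : [a,b] → ℝ be continuous. Define u(t) = ∫_a^b G(t,s)·y(s)·(s−a)^{α−2} ds for t ∈ [a,b], where G is the Green function G(t,s) = (1/(b−a))·(−(b−a)(t−s) + (b−s)(t−a)) for a ≤ s ≤ t ≤ b and G(t,s) = (1/(b−a))·(b−s)(t−a) for a ≤ t < s ≤ b. Then u(a) = 0, u(b) = 0, and for every t ∈ (a,b) the second derivative u''(t) exists and satisfies (t−a)^{2−α}·u''(t) + y(t) = 0. -/

import Mathlib

open Set Filter Topology MeasureTheory intervalIntegral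

/-- The Green-function representation `u(t) = ∫_a^b G(t,s) y(s) (s-a)^(α-2) ds`
solves the conformable Dirichlet problem: `u(a) = u(b) = 0` and, for every
`t ∈ (a, b)`, the second derivative `u''(t)` exists and
`(t-a)^(2-α) u''(t) + y(t) = 0`. -/
theorem green_representation_solves_problem
    (a b α : ℝ) (hab : a < b) (hα1 : 1 < α) (hα2 : α < 2)
    (y : ℝ → ℝ) (hy : ContinuousOn y (Set.Icc a b))
    (G : ℝ → ℝ → ℝ)
    (hG1 : ∀ t s : ℝ, s ≤ t →
      G t s = (1 / (b - a)) * (-(b - a) * (t - s) + (b - s) * (t - a)))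
    (hG2 : ∀ t s : ℝ, t < s → G t s = (1 / (b - a)) * ((b - s) * (t - a)))
    (u : ℝ → ℝ)
    (hu : ∀ t : ℝ, u t = ∫ s in a..b, G t s * y s * (s - a) ^ (α - 2)) :
    u a = 0 ∧ u b = 0 ∧
      ∀ t ∈ Set.Ioo a b, ∃ L : ℝ, HasDerivAt (deriv u) L t ∧
        (t - a) ^ (2 - α) * L + y t = 0 := by
  have hba : (0:ℝ) < b - a := by linarith
  have hbane : b - a ≠ 0 := ne_of_gt hba
  set f : ℝ → ℝ := fun s => y s * (s - a) ^ (α - 2) with hfdef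
  -- boundary values
  have hua : u a = 0 := by
    rw [hu a, show (0:ℝ) = ∫ (_ : ℝ) in a..b, (0:ℝ) by simp]
    apply intervalIntegral.integral_congr
    intro s hs
    rw [Set.uIcc_of_le hab.le] at hs
    dsimp only
    rcases eq_or_lt_of_le hs.1 with h | h
    · rw [← h, hG1 a a le_rfl]; ring
    · rw [hG2 a s h]; ring
  have hub : u b = 0 := by
    rw [hu b, show (0:ℝ) = ∫ (_ : ℝ) in a..b, (0:ℝ) by simp]
    apply intervalIntegral.integral_congr
    intro s hs
    rw [Set.uIcc_of_le hab.le] at hs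
    dsimp only
    rw [hG1 b s hs.2]; ring
  -- integrability of f on a..b
  have hrpow : IntervalIntegrable (fun s => (s - a) ^ (α - 2)) volume a b := by
    have h0 : IntervalIntegrable (fun x : ℝ => x ^ (α - 2)) volume 0 (b - a) :=
      intervalIntegrable_rpow' (by linarith)
    have h1 := h0.comp_sub_right a
    simpa using h1
  have hfint : IntervalIntegrable f volume a b :=
    hrpow.continuousOn_mul (by rw [Set.uIcc_of_le hab.le]; exact hy)
  have hfsub : ∀ t ∈ Set.Icc a b, ∀ t' ∈ Set.Icc a b,
      IntervalIntegrable f volume t t' := by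
    intro t ht t' ht'
    apply hfint.mono_set
    rw [Set.uIcc_of_le hab.le]
    exact Set.uIcc_subset_Icc ht ht'
  -- continuity of f on Ioo a b
  have hfcont : ∀ x ∈ Set.Ioo a b, ContinuousAt f x := by
    intro x hx
    have hyc : ContinuousAt y x := hy.continuousAt (Icc_mem_nhds hx.1 hx.2)
    have hrc : ContinuousAt (fun s : ℝ => (s - a) ^ (α - 2)) x :=
      (continuousAt_id.sub continuousAt_const).rpow_const
        (Or.inl (sub_ne_zero.mpr (ne_of_gt hx.1)))
    exact hyc.mul hrc
  have hfcontOn : ContinuousOn f (Set.Ioo a b) :=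
    fun x hx => (hfcont x hx).continuousWithinAt
  -- define the pieces
  set A : ℝ → ℝ := fun t => ∫ s in a..t, f s with hAdef
  set B : ℝ → ℝ := fun t => ∫ s in a..t, s * f s with hBdef
  set Cc : ℝ := (1 / (b - a)) * ∫ s in a..b, (b - s) * f s with hCdef
  -- representation of u on Icc a b
  have hrep : ∀ t ∈ Set.Icc a b, u t = Cc * (t - a) - (t * A t - B t) := by
    intro t ht
    have hcont_lin : ∀ c d : ℝ, ContinuousOn (fun s : ℝ => c + d * s) (Set.uIcc a b) :=
      fun c d => (continuous_const.add (continuous_const.mul continuous_id)).continuousOn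
    have hcbs : Continuous (fun s : ℝ => b - s) := by fun_prop
    have hcts : Continuous (fun s : ℝ => t - s) := by fun_prop
    have hint1 : IntervalIntegrable (fun s => (b - s) * f s) volume a b :=
      hfint.continuousOn_mul hcbs.continuousOn
    have hintat : IntervalIntegrable f volume a t := hfsub a ⟨le_rfl, hab.le⟩ t ht
    have hinttb : IntervalIntegrable f volume t b := hfsub t ht b ⟨hab.le, le_rfl⟩
    have hint2 : IntervalIntegrable (fun s => ((t - a) / (b - a)) * ((b - s) * f s)) volume a t := by
      apply IntervalIntegrable.const_mul
      exact hintat.continuousOn_mul hcbs.continuousOn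
    have hint2' : IntervalIntegrable (fun s => ((t - a) / (b - a)) * ((b - s) * f s)) volume t b := by
      apply IntervalIntegrable.const_mul
      exact hinttb.continuousOn_mul hcbs.continuousOn
    have hint3 : IntervalIntegrable (fun s => (t - s) * f s) volume a t :=
      hintat.continuousOn_mul hcts.continuousOn
    -- split the integral
    have hintG1 : IntervalIntegrable (fun s => G t s * y s * (s - a) ^ (α - 2)) volume a t := by
      apply (hint2.sub hint3).congr
      intro s hs
      rw [Set.uIoc_of_le ht.1] at hs
      dsimp only
      have hGe : G t s = (t - a) / (b - a) * (b - s) - (t - s) := by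
        rw [hG1 t s hs.2]; field_simp; ring
      rw [hGe, hfdef]; ring
    have hintG2 : IntervalIntegrable (fun s => G t s * y s * (s - a) ^ (α - 2)) volume t b := by
      apply hint2'.congr
      intro s hs
      rw [Set.uIoc_of_le ht.2] at hs
      dsimp only
      have hGe : G t s = (t - a) / (b - a) * (b - s) := by
        rw [hG2 t s hs.1]; field_simp
      rw [hGe, hfdef]; ring
    have hsplit : u t = (∫ s in a..t, G t s * y s * (s - a) ^ (α - 2))
        + ∫ s in t..b, G t s * y s * (s - a) ^ (α - 2) := by
      rw [hu t, ← intervalIntegral.integral_add_adjacent_intervals hintG1 hintG2]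
    have heq1 : (∫ s in a..t, G t s * y s * (s - a) ^ (α - 2))
        = (∫ s in a..t, ((t - a) / (b - a)) * ((b - s) * f s)) - ∫ s in a..t, (t - s) * f s := by
      rw [← intervalIntegral.integral_sub hint2 hint3]
      apply intervalIntegral.integral_congr
      intro s hs
      rw [Set.uIcc_of_le ht.1] at hs
      dsimp only
      have hGe : G t s = (t - a) / (b - a) * (b - s) - (t - s) := by
        rw [hG1 t s hs.2]; field_simp; ring
      rw [hGe, hfdef]; ring
    have heq2 : (∫ s in t..b, G t s * y s * (s - a) ^ (α - 2))
        = ∫ s in t..b, ((t - a) / (b - a)) * ((b - s) * f s) := by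
      apply intervalIntegral.integral_congr
      intro s hs
      rw [Set.uIcc_of_le ht.2] at hs
      dsimp only
      have hGe : G t s = (t - a) / (b - a) * (b - s) := by
        rcases eq_or_lt_of_le hs.1 with h | h
        · rw [← h, hG1 t t le_rfl]; field_simp; ring
        · rw [hG2 t s h]; field_simp
      rw [hGe, hfdef]; ring
    have hjoin : (∫ s in a..t, ((t - a) / (b - a)) * ((b - s) * f s))
        + (∫ s in t..b, ((t - a) / (b - a)) * ((b - s) * f s))
        = ∫ s in a..b, ((t - a) / (b - a)) * ((b - s) * f s) :=
      intervalIntegral.integral_add_adjacent_intervals hint2 hint2'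
    have hC : (∫ s in a..b, ((t - a) / (b - a)) * ((b - s) * f s)) = Cc * (t - a) := by
      rw [intervalIntegral.integral_const_mul, hCdef]
      ring
    have hTS : (∫ s in a..t, (t - s) * f s) = t * A t - B t := by
      have h1 : IntervalIntegrable (fun s => t * f s) volume a t := hintat.const_mul t
      have h2 : IntervalIntegrable (fun s => s * f s) volume a t :=
        hintat.continuousOn_mul continuous_id.continuousOn
      rw [show (fun s => (t - s) * f s) = fun s => t * f s - s * f s by funext s; ring,
        intervalIntegral.integral_sub h1 h2, intervalIntegral.integral_const_mul]
    rw [hsplit, heq1, heq2]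
    rw [sub_add_eq_add_sub, hjoin, hC, hTS]
  -- derivatives of A and B at interior points
  have hA : ∀ x ∈ Set.Ioo a b, HasDerivAt A (f x) x := by
    intro x hx
    exact intervalIntegral.integral_hasDerivAt_right
      (hfsub a ⟨le_rfl, hab.le⟩ x ⟨hx.1.le, hx.2.le⟩)
      (hfcontOn.stronglyMeasurableAtFilter isOpen_Ioo x hx)
      (hfcont x hx)
  have hB : ∀ x ∈ Set.Ioo a b, HasDerivAt B (x * f x) x := by
    intro x hx
    have hint : IntervalIntegrable (fun s => s * f s) volume a x :=
      (hfsub a ⟨le_rfl, hab.le⟩ x ⟨hx.1.le, hx.2.le⟩).continuousOn_mul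
        continuous_id.continuousOn
    have hcont : ContinuousOn (fun s : ℝ => s * f s) (Set.Ioo a b) :=
      fun z hz => (continuousAt_id.mul (hfcont z hz)).continuousWithinAt
    exact intervalIntegral.integral_hasDerivAt_right hint
      (hcont.stronglyMeasurableAtFilter isOpen_Ioo x hx)
      (continuousAt_id.mul (hfcont x hx))
  -- derivative of u on Ioo a b
  have hderiv : ∀ x ∈ Set.Ioo a b, HasDerivAt u (Cc - A x) x := by
    intro x hx
    have hAx := hA x hx
    have hBx := hB x hx
    have h1 : HasDerivAt (fun t => Cc * (t - a) - (t * A t - B t))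
        (Cc * 1 - ((1 * A x + x * f x) - x * f x)) x := by
      exact (((hasDerivAt_id x).sub_const a).const_mul Cc).sub
        (((hasDerivAt_id x).mul hAx).sub hBx)
    have h2 : HasDerivAt (fun t => Cc * (t - a) - (t * A t - B t)) (Cc - A x) x := by
      convert h1 using 1; ring
    apply h2.congr_of_eventuallyEq
    filter_upwards [Ioo_mem_nhds hx.1 hx.2] with z hz
    exact hrep z ⟨hz.1.le, hz.2.le⟩
  refine ⟨hua, hub, ?_⟩
  intro t ht
  refine ⟨-(f t), ?_, ?_⟩
  · have h2 : HasDerivAt (fun x => Cc - A x) (-(f t)) t := (hA t ht).const_sub Cc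
    apply h2.congr_of_eventuallyEq
    filter_upwards [Ioo_mem_nhds ht.1 ht.2] with z hz
    exact (hderiv z hz).deriv
  · have hpos : 0 < t - a := sub_pos.mpr ht.1
    have hone : (t - a) ^ (2 - α) * (t - a) ^ (α - 2) = 1 := by
      rw [← Real.rpow_add hpos]; norm_num
    have : (t - a) ^ (2 - α) * -(f t) + y t
        = -(y t * ((t - a) ^ (2 - α) * (t - a) ^ (α - 2))) + y t := by
      simp only [hfdef]; ring
    rw [this, hone]; ring
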